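/- Let R be a commutative ring, n ≥ 0, and let a_1, …, a_n and b_1, …, b_{n+1} be elements of R. Then in the polynomial ring R[x], ∏_{i=1}^{n} (x − a_i) = ∑_{j=0}^{n} comp_{n−j}({a_1, …, a_n}; {b_1, …, b_{j+1}}) · ∏_{i=1}^{j} (x − b_i), i.e. the connection constant expressing a polynomial with persistant roots a_1, …, a_n in terms of the polynomials with persistant roots b_1, b_2, … is a complementary symmetric function. -/

import Mathlib

/-- `h_n(B)`: the complete homogeneous symmetric function of degree `n` in the
elements of the multiset `B`, defined as the coefficient of `t^n` in
`∏_{b ∈ B} (1 + b t + b² t² + ⋯) = ∏_{b ∈ B} 1/(1 - b t)`. -/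
noncomputable def hsymmM {R : Type*} [CommRing R] (B : Multiset R) (n : ℕ) : R :=
  PowerSeries.coeff n ((B.map fun b => PowerSeries.mk fun k => b ^ k).prod)

/-- `e_k(A)`: the elementary symmetric function of degree `k` in the elements of
the multiset `A`. -/
def esymmM {R : Type*} [CommRing R] (A : Multiset R) (k : ℕ) : R :=
  ((A.powersetCard k).map Multiset.prod).sum

/-- The complementary symmetric function `comp_n(A;B) = ∑_{j=0}^n (-1)^j e_j(A) h_{n-j}(B)`. -/
noncomputable def compM {R : Type*} [CommRing R] (A B : Multiset R) (n : ℕ) : R :=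
  ∑ j ∈ Finset.range (n + 1), (-1 : R) ^ j * esymmM A j * hsymmM B (n - j)

section Aux

open PowerSeries

variable {R : Type*} [CommRing R]

/-- The generating series `∏_{a ∈ A} (1 - a X)` of the (signed) elementary symmetric
functions. -/
noncomputable def EpsM (A : Multiset R) : PowerSeries R :=
  (A.map fun a => (1 : PowerSeries R) - PowerSeries.C a * PowerSeries.X).prod

/-- The generating series `∏_{b ∈ B} 1/(1 - b X)` of the complete homogeneous symmetric
functions. -/
noncomputable def HpsM (B : Multiset R) : PowerSeries R :=
  (B.map fun b => PowerSeries.mk fun k => b ^ k).prod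

lemma hsymmM_eq_coeff (B : Multiset R) (n : ℕ) : hsymmM B n = PowerSeries.coeff n (HpsM B) :=
  rfl

lemma EpsM_cons (a : R) (A : Multiset R) :
    EpsM (a ::ₘ A) = (1 - PowerSeries.C a * PowerSeries.X) * EpsM A := by
  simp [EpsM, Multiset.map_cons, Multiset.prod_cons]

lemma one_sub_mul_geom (b : R) :
    ((1 : PowerSeries R) - PowerSeries.C b * PowerSeries.X) *
      PowerSeries.mk (fun k => b ^ k) = 1 := by
  ext n
  cases n with
  | zero => simp
  | succ n =>
    rw [sub_mul, one_mul, mul_assoc]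
    simp [PowerSeries.coeff_succ_X_mul, pow_succ, mul_comm]

lemma HpsM_eq (b : R) (B : Multiset R) :
    HpsM B = (1 - PowerSeries.C b * PowerSeries.X) * HpsM (b ::ₘ B) := by
  rw [HpsM, HpsM, Multiset.map_cons, Multiset.prod_cons, ← mul_assoc, one_sub_mul_geom, one_mul]

lemma esymmM_zero (A : Multiset R) : esymmM A 0 = 1 := by
  simp [esymmM]

lemma esymmM_cons (a : R) (A : Multiset R) (k : ℕ) :
    esymmM (a ::ₘ A) (k + 1) = esymmM A (k + 1) + a * esymmM A k := by
  simp only [esymmM, Multiset.powersetCard_cons, Multiset.map_add, Multiset.sum_add,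
    Multiset.map_map, Function.comp_def, Multiset.prod_cons]
  rw [Multiset.sum_map_mul_left]

lemma esymmM_eq_zero (A : Multiset R) (k : ℕ) (h : Multiset.card A < k) : esymmM A k = 0 := by
  have : A.powersetCard k = 0 := by
    rw [show k = Multiset.card A + (k - Multiset.card A) by omega]
    exact Multiset.powersetCard_card_add _ (by omega)
  simp [esymmM, this]

lemma coeff_EpsM (A : Multiset R) : ∀ k, PowerSeries.coeff k (EpsM A) = (-1) ^ k * esymmM A k := by
  induction A using Multiset.induction with
  | empty =>
    intro k
    cases k with
    | zero => simp [EpsM, esymmM]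
    | succ k =>
      simp [EpsM, esymmM, Multiset.powersetCard_zero_right, PowerSeries.coeff_one]
  | cons a A ih =>
    intro k
    rw [EpsM_cons]
    cases k with
    | zero =>
      have h0 := ih 0
      rw [PowerSeries.coeff_zero_eq_constantCoeff] at h0
      simp only [PowerSeries.coeff_zero_eq_constantCoeff, map_mul, map_sub, map_one,
        PowerSeries.constantCoeff_C, PowerSeries.constantCoeff_X, mul_zero, sub_zero, one_mul,
        h0]
      simp [esymmM_zero]
    | succ k =>
      rw [sub_mul, one_mul, mul_assoc, map_sub, PowerSeries.coeff_C_mul,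
        PowerSeries.coeff_succ_X_mul, ih, ih, esymmM_cons]
      ring

lemma compM_eq_coeff (A B : Multiset R) (n : ℕ) :
    compM A B n = PowerSeries.coeff n (EpsM A * HpsM B) := by
  rw [PowerSeries.coeff_mul, Finset.Nat.sum_antidiagonal_eq_sum_range_succ_mk, compM]
  refine Finset.sum_congr rfl fun j hj => ?_
  rw [coeff_EpsM, hsymmM_eq_coeff, mul_assoc]

lemma constantCoeff_EpsM (A : Multiset R) : PowerSeries.constantCoeff (EpsM A) = 1 := by
  induction A using Multiset.induction with
  | empty => simp [EpsM]
  | cons a A ih => rw [EpsM_cons, map_mul, ih]; simp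

lemma constantCoeff_HpsM (B : Multiset R) : PowerSeries.constantCoeff (HpsM B) = 1 := by
  induction B using Multiset.induction with
  | empty => simp [HpsM]
  | cons b B ih =>
    rw [HpsM, Multiset.map_cons, Multiset.prod_cons, map_mul]
    rw [HpsM] at ih
    rw [ih, PowerSeries.constantCoeff_mk]
    simp

lemma compM_zero (A B : Multiset R) : compM A B 0 = 1 := by
  rw [compM_eq_coeff, PowerSeries.coeff_zero_eq_constantCoeff, map_mul, constantCoeff_EpsM,
    constantCoeff_HpsM, one_mul]

lemma compM_nil_right (A : Multiset R) (k : ℕ) (h : Multiset.card A < k) :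
    compM A 0 k = 0 := by
  have hH : HpsM (0 : Multiset R) = 1 := by simp [HpsM]
  rw [compM_eq_coeff, hH, mul_one, coeff_EpsM, esymmM_eq_zero A k h, mul_zero]

lemma compM_cons_cons (a b : R) (A B : Multiset R) (m : ℕ) :
    compM (a ::ₘ A) (b ::ₘ B) (m + 1) =
      compM A B (m + 1) + (b - a) * compM A (b ::ₘ B) m := by
  have key : EpsM (a ::ₘ A) * HpsM (b ::ₘ B) =
      EpsM A * HpsM B +
        PowerSeries.C (b - a) * (PowerSeries.X * (EpsM A * HpsM (b ::ₘ B))) := by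
    rw [EpsM_cons, HpsM_eq b B, map_sub]
    ring
  rw [compM_eq_coeff, key, map_add, PowerSeries.coeff_C_mul, PowerSeries.coeff_succ_X_mul,
    ← compM_eq_coeff, ← compM_eq_coeff]

end Aux

/-- Connection constants between sequences of polynomials with persistant roots:
`∏_{i=1}^n (x - a_i) = ∑_{j=0}^n comp_{n-j}({a₁,…,a_n}; {b₁,…,b_{j+1}}) ∏_{i=1}^j (x - b_i)`. -/
theorem stmt6 {R : Type*} [CommRing R] (n : ℕ) (a b : ℕ → R) :
    ∏ i ∈ Finset.range n, (Polynomial.X - Polynomial.C (a (i + 1))) =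
      ∑ j ∈ Finset.range (n + 1),
        Polynomial.C (compM ((Multiset.range n).map fun i => a (i + 1))
            ((Multiset.range (j + 1)).map fun i => b (i + 1)) (n - j)) *
          ∏ i ∈ Finset.range j, (Polynomial.X - Polynomial.C (b (i + 1))) := by
  induction n with
  | zero => simp [compM_zero]
  | succ n ih =>
    have hA : ((Multiset.range (n + 1)).map fun i => a (i + 1)) =
        a (n + 1) ::ₘ ((Multiset.range n).map fun i => a (i + 1)) := by
      rw [Multiset.range_succ, Multiset.map_cons]
    have hB : ∀ j : ℕ, ((Multiset.range (j + 1)).map fun i => b (i + 1)) =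
        b (j + 1) ::ₘ ((Multiset.range j).map fun i => b (i + 1)) := fun j => by
      rw [Multiset.range_succ, Multiset.map_cons]
    rw [Finset.prod_range_succ, ih, Finset.sum_mul, hA]
    symm
    calc
      ∑ j ∈ Finset.range (n + 1 + 1),
          Polynomial.C (compM (a (n + 1) ::ₘ ((Multiset.range n).map fun i => a (i + 1)))
              ((Multiset.range (j + 1)).map fun i => b (i + 1)) (n + 1 - j)) *
            ∏ i ∈ Finset.range j, (Polynomial.X - Polynomial.C (b (i + 1)))
        = (∑ j ∈ Finset.range (n + 1),
            Polynomial.C (compM (a (n + 1) ::ₘ ((Multiset.range n).map fun i => a (i + 1)))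
                ((Multiset.range (j + 1)).map fun i => b (i + 1)) (n + 1 - j)) *
              ∏ i ∈ Finset.range j, (Polynomial.X - Polynomial.C (b (i + 1)))) +
            ∏ i ∈ Finset.range (n + 1), (Polynomial.X - Polynomial.C (b (i + 1))) := by
          rw [Finset.sum_range_succ, Nat.sub_self, compM_zero, map_one, one_mul]
      _ = (∑ j ∈ Finset.range (n + 1),
            (Polynomial.C (compM ((Multiset.range n).map fun i => a (i + 1))
                  ((Multiset.range j).map fun i => b (i + 1)) (n - j + 1)) *
                ∏ i ∈ Finset.range j, (Polynomial.X - Polynomial.C (b (i + 1))) +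
              Polynomial.C ((b (j + 1) - a (n + 1)) *
                  compM ((Multiset.range n).map fun i => a (i + 1))
                    ((Multiset.range (j + 1)).map fun i => b (i + 1)) (n - j)) *
                ∏ i ∈ Finset.range j, (Polynomial.X - Polynomial.C (b (i + 1))))) +
            ∏ i ∈ Finset.range (n + 1), (Polynomial.X - Polynomial.C (b (i + 1))) := by
          congr 1
          refine Finset.sum_congr rfl fun j hj => ?_
          have hj' : j ≤ n := by
            simpa [Nat.lt_succ_iff] using Finset.mem_range.mp hj
          have h1 : n + 1 - j = (n - j) + 1 := by omega
          rw [h1, hB j, compM_cons_cons, map_add, add_mul, map_mul]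
      _ = ((∑ j ∈ Finset.range (n + 1),
            Polynomial.C (compM ((Multiset.range n).map fun i => a (i + 1))
                ((Multiset.range j).map fun i => b (i + 1)) (n - j + 1)) *
              ∏ i ∈ Finset.range j, (Polynomial.X - Polynomial.C (b (i + 1)))) +
            ∏ i ∈ Finset.range (n + 1), (Polynomial.X - Polynomial.C (b (i + 1)))) +
            ∑ j ∈ Finset.range (n + 1),
              Polynomial.C ((b (j + 1) - a (n + 1)) *
                  compM ((Multiset.range n).map fun i => a (i + 1))
                    ((Multiset.range (j + 1)).map fun i => b (i + 1)) (n - j)) *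
                ∏ i ∈ Finset.range j, (Polynomial.X - Polynomial.C (b (i + 1))) := by
          rw [Finset.sum_add_distrib]; ring
      _ = ((∑ j ∈ Finset.range n,
            Polynomial.C (compM ((Multiset.range n).map fun i => a (i + 1))
                ((Multiset.range (j + 1)).map fun i => b (i + 1)) (n - j)) *
              ∏ i ∈ Finset.range (j + 1), (Polynomial.X - Polynomial.C (b (i + 1)))) +
            ∏ i ∈ Finset.range (n + 1), (Polynomial.X - Polynomial.C (b (i + 1)))) +
            ∑ j ∈ Finset.range (n + 1),
              Polynomial.C ((b (j + 1) - a (n + 1)) *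
                  compM ((Multiset.range n).map fun i => a (i + 1))
                    ((Multiset.range (j + 1)).map fun i => b (i + 1)) (n - j)) *
                ∏ i ∈ Finset.range j, (Polynomial.X - Polynomial.C (b (i + 1))) := by
          congr 2
          rw [Finset.sum_range_succ']
          have h0 : compM ((Multiset.range n).map fun i => a (i + 1))
              ((Multiset.range 0).map fun i => b (i + 1)) (n - 0 + 1) = 0 := by
            rw [show ((Multiset.range 0).map fun i => b (i + 1)) = 0 by simp]
            exact compM_nil_right _ _ (by simp)
          rw [h0, map_zero, zero_mul, add_zero]
          refine Finset.sum_congr rfl fun j hj => ?_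
          have hj' : j < n := Finset.mem_range.mp hj
          rw [show n - (j + 1) + 1 = n - j by omega]
      _ = ∑ j ∈ Finset.range (n + 1),
            Polynomial.C (compM ((Multiset.range n).map fun i => a (i + 1))
                ((Multiset.range (j + 1)).map fun i => b (i + 1)) (n - j)) *
              (∏ i ∈ Finset.range j, (Polynomial.X - Polynomial.C (b (i + 1)))) *
              (Polynomial.X - Polynomial.C (a (n + 1))) := by
          have step : ∀ j ∈ Finset.range (n + 1),
              Polynomial.C (compM ((Multiset.range n).map fun i => a (i + 1))
                  ((Multiset.range (j + 1)).map fun i => b (i + 1)) (n - j)) *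
                (∏ i ∈ Finset.range j, (Polynomial.X - Polynomial.C (b (i + 1)))) *
                (Polynomial.X - Polynomial.C (a (n + 1))) =
              Polynomial.C (compM ((Multiset.range n).map fun i => a (i + 1))
                  ((Multiset.range (j + 1)).map fun i => b (i + 1)) (n - j)) *
                ∏ i ∈ Finset.range (j + 1), (Polynomial.X - Polynomial.C (b (i + 1))) +
              Polynomial.C ((b (j + 1) - a (n + 1)) *
                  compM ((Multiset.range n).map fun i => a (i + 1))
                    ((Multiset.range (j + 1)).map fun i => b (i + 1)) (n - j)) *
                ∏ i ∈ Finset.range j, (Polynomial.X - Polynomial.C (b (i + 1))) := by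
            intro j _
            rw [Finset.prod_range_succ, map_mul, map_sub]
            ring
          rw [Finset.sum_congr rfl step, Finset.sum_add_distrib,
            Finset.sum_range_succ (fun j =>
              Polynomial.C (compM ((Multiset.range n).map fun i => a (i + 1))
                  ((Multiset.range (j + 1)).map fun i => b (i + 1)) (n - j)) *
                ∏ i ∈ Finset.range (j + 1), (Polynomial.X - Polynomial.C (b (i + 1)))),
            Nat.sub_self, compM_zero, map_one, one_mul]
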